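/- Let (C, ω, τ) be a noncommutative probability space with tracial weight, let the pair (A, B) of ∗-subalgebras (1 ∈ B) be cyclically monotone with respect to (ω, τ), and let a ∈ A, b ∈ B be self-adjoint. Then for every even n, ω((i(ab - ba))^n) = 2 r^n ω(a^n), where r = √(τ(b²) - τ(b)²), and for every odd n, ω((i(ab - ba))^n) = 0. -/

import Mathlib

open scoped ComplexOrder

namespace CMAux
set_option linter.unusedSectionVars false
set_option linter.deprecated false

variable {C : Type*} [Ring C] [StarRing C] [Algebra ℂ C] [StarModule ℂ C]

def glet (a b₀ : C) : Bool → C := fun t => if t then a else b₀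
def gfac (a b₀ : C) : Bool → C := fun s => if s then a * b₀ else b₀ * a
def letterProd (a b₀ : C) (ll : List Bool) : C := (ll.map (glet a b₀)).prod
def facProd (a b₀ : C) (w : List Bool) : C := (w.map (gfac a b₀)).prod
def lettersOf (w : List Bool) : List Bool :=
  w.flatMap fun s => if s then [true, false] else [false, true]
def grp (a b₀ : C) : ℕ → ℕ → List Bool → List (C × C)
  | m, k, [] => [(a ^ m, b₀ ^ k)]
  | m, k, true :: ls =>
      if k = 0 then grp a b₀ (m + 1) 0 ls else (a ^ m, b₀ ^ k) :: grp a b₀ 1 0 ls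
  | m, k, false :: ls => grp a b₀ m (k + 1) ls
def altRec : Bool → ℕ → List Bool
  | _, 0 => []
  | s, m + 1 => s :: (!s) :: altRec s m

lemma list_range_getD {α : Type*} (l : List α) (d : α) :
    (List.range l.length).map (fun i => l.getD i d) = l := by
  induction l with
  | nil => simp
  | cons x l ih =>
    rw [List.length_cons, List.range_succ_eq_map, List.map_cons, List.map_map]
    have h : ((fun i => (x :: l).getD i d) ∘ Nat.succ) = fun i => l.getD i d := by
      funext i; simp
    rw [h, ih]
    simp

lemma finset_prod_getD {α M : Type*} [CommMonoid M] (l : List α) (d : α) (f : α → M) :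
    ∏ i ∈ Finset.range l.length, f (l.getD i d) = (l.map f).prod := by
  induction l with
  | nil => simp
  | cons x l ih =>
    rw [List.length_cons, Finset.prod_range_succ']
    simp only [List.getD_cons_succ, List.getD_cons_zero, ih, List.map_cons, List.prod_cons]
    exact mul_comm _ _

lemma getD_drop {α : Type*} (l : List α) (d : α) (i j : ℕ) :
    (l.drop i).getD j d = l.getD (i + j) d := by
  induction i generalizing l with
  | zero => simp
  | succ i ih =>
    cases l with
    | nil => simp
    | cons x l => simpa [Nat.succ_add] using ih l

lemma altRec_length (s : Bool) (m : ℕ) : (altRec s m).length = 2 * m := by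
  induction m with
  | zero => rfl
  | succ m ih => simp [altRec, ih]; ring

lemma altRec_count (s : Bool) (m : ℕ) : (altRec s m).count false = m := by
  induction m with
  | zero => rfl
  | succ m ih => cases s <;> simp [altRec, List.count_cons, ih]

lemma facProd_altRec (a b₀ : C) (s : Bool) (m : ℕ) :
    facProd a b₀ (altRec s m) = (gfac a b₀ s * gfac a b₀ !s) ^ m := by
  induction m with
  | zero => simp [altRec, facProd]
  | succ m ih =>
    simp only [altRec, facProd, List.map_cons, List.prod_cons] at *
    rw [ih, pow_succ']
    simp [mul_assoc]

lemma grp_prod (a b₀ : C) : ∀ (ls : List Bool) (m k : ℕ),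
    ((grp a b₀ m k ls).map fun p => p.1 * p.2).prod = a ^ m * b₀ ^ k * letterProd a b₀ ls := by
  intro ls
  induction ls with
  | nil => intro m k; simp [grp, letterProd]
  | cons s ls ih =>
    intro m k
    cases s with
    | true =>
      by_cases hk : k = 0
      · subst hk
        rw [grp, if_pos rfl, ih]
        simp [letterProd, glet, pow_succ, mul_assoc]
      · rw [grp, if_neg hk, List.map_cons, List.prod_cons, ih]
        simp [letterProd, glet, pow_succ, mul_assoc]
    | false =>
      rw [grp, ih]
      simp [letterProd, glet, pow_succ, mul_assoc]

lemma grp_ne_nil (a b₀ : C) : ∀ (ls : List Bool) (m k : ℕ), grp a b₀ m k ls ≠ [] := by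
  intro ls
  induction ls with
  | nil => intro m k; simp [grp]
  | cons s ls ih =>
    intro m k
    cases s with
    | true =>
      by_cases hk : k = 0
      · simpa [grp, hk] using ih (m+1) 0
      · simp [grp, hk]
    | false => simpa [grp] using ih m (k+1)

lemma apow_mem {A : NonUnitalStarSubalgebra ℂ C} {a : C} (ha : a ∈ A) :
    ∀ k, 1 ≤ k → a ^ k ∈ A := by
  intro k hk
  induction k with
  | zero => omega
  | succ k ih =>
    cases Nat.eq_or_lt_of_le hk with
    | inl h => simpa [← h] using ha
    | inr h =>
      rw [pow_succ]
      exact mul_mem (ih (by omega)) ha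

lemma grp_mem {A : NonUnitalStarSubalgebra ℂ C} {B : StarSubalgebra ℂ C} {a b₀ : C}
    (ha : a ∈ A) (hb₀ : b₀ ∈ B) :
    ∀ (ls : List Bool) (m k : ℕ), 1 ≤ m → ∀ p ∈ grp a b₀ m k ls, p.1 ∈ A ∧ p.2 ∈ B := by
  intro ls
  induction ls with
  | nil =>
    intro m k hm p hp
    simp only [grp, List.mem_singleton] at hp
    subst hp
    exact ⟨apow_mem ha m hm, pow_mem hb₀ k⟩
  | cons s ls ih =>
    intro m k hm p hp
    cases s with
    | true =>
      by_cases hk : k = 0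
      · rw [grp, if_pos hk] at hp
        exact ih (m+1) 0 (by omega) p hp
      · rw [grp, if_neg hk] at hp
        rcases List.mem_cons.mp hp with h | h
        · subst h; exact ⟨apow_mem ha m hm, pow_mem hb₀ k⟩
        · exact ih 1 0 le_rfl p h
    | false =>
      rw [grp] at hp
      exact ih m (k+1) hm p hp

variable (A : NonUnitalStarSubalgebra ℂ C) (B : StarSubalgebra ℂ C) (ω τ : C →ₗ[ℂ] ℂ)

lemma hcm_list
    (hcm : ∀ (n : ℕ) (a b : ℕ → C), 1 ≤ n → (∀ i, a i ∈ A) → (∀ i, b i ∈ B) →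
      ω (((List.range n).map (fun i => a i * b i)).prod)
        = ω (((List.range n).map a).prod) * ∏ i ∈ Finset.range n, τ (b i))
    {a : C} (ha : a ∈ A)
    (P : List (C × C)) (hne : P ≠ [])
    (hmem : ∀ p ∈ P, p.1 ∈ A ∧ p.2 ∈ B) :
    ω ((P.map fun p => p.1 * p.2).prod)
      = ω ((P.map Prod.fst).prod) * (P.map fun p => τ p.2).prod := by
  have hlen : 1 ≤ P.length := List.length_pos_iff.mpr hne
  have key : ∀ (f : C × C → C),
      (List.range P.length).map (fun i => f (P.getD i (a, 1))) = P.map f := by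
    intro f
    have : (fun i => f (P.getD i (a, 1))) = f ∘ (fun i => P.getD i (a, 1)) := rfl
    rw [this, ← List.map_map, list_range_getD]
  have hmem' : ∀ i : ℕ, (P.getD i (a, 1)).1 ∈ A ∧ (P.getD i (a, 1)).2 ∈ B := by
    intro i
    by_cases hi : i < P.length
    · rw [List.getD_eq_getElem _ _ hi]
      exact hmem _ (List.getElem_mem hi)
    · rw [List.getD_eq_default _ _ (by omega)]
      exact ⟨ha, one_mem B⟩
  have h := hcm P.length (fun i => (P.getD i (a, 1)).1) (fun i => (P.getD i (a, 1)).2)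
    hlen (fun i => (hmem' i).1) (fun i => (hmem' i).2)
  rw [key (fun p => p.1 * p.2), key Prod.fst] at h
  rw [h]
  congr 1
  exact finset_prod_getD P (a, 1) (fun p => τ p.2)

lemma omega_rot (hωtr : ∀ x y : C, ω (x * y) = ω (y * x))
    (F : Bool → C) (u v : List Bool) :
    ω (((u ++ v).map F).prod) = ω (((v ++ u).map F).prod) := by
  rw [List.map_append, List.prod_append, hωtr, ← List.prod_append, ← List.map_append]


section Eval

variable (hcm : ∀ (n : ℕ) (a b : ℕ → C), 1 ≤ n → (∀ i, a i ∈ A) → (∀ i, b i ∈ B) →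
      ω (((List.range n).map (fun i => a i * b i)).prod)
        = ω (((List.range n).map a).prod) * ∏ i ∈ Finset.range n, τ (b i))
variable (hωtr : ∀ x y : C, ω (x * y) = ω (y * x))
variable {a b₀ : C} (ha : a ∈ A) (hb₀ : b₀ ∈ B) (hτb₀ : τ b₀ = 0)

include hcm ha hb₀ hτb₀ in
lemma letters_ABA_zero (rest : List Bool) :
    ω (letterProd a b₀ (true :: false :: true :: rest)) = 0 := by
  have h1 : letterProd a b₀ (true :: false :: true :: rest)
      = ((grp a b₀ 1 0 (false :: true :: rest)).map fun p => p.1 * p.2).prod := by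
    rw [grp_prod]
    simp [letterProd, glet, mul_assoc]
  have h2 : grp a b₀ 1 0 (false :: true :: rest) = (a ^ 1, b₀ ^ 1) :: grp a b₀ 1 0 rest := by
    rw [grp, grp]
    simp
  rw [h1, hcm_list A B ω τ hcm ha _ (grp_ne_nil a b₀ _ _ _) (grp_mem ha hb₀ _ 1 0 le_rfl), h2]
  simp [hτb₀]

lemma facProd_eq_letterProd (a b₀ : C) (w : List Bool) :
    facProd a b₀ w = letterProd a b₀ (lettersOf w) := by
  induction w with
  | nil => simp [facProd, letterProd, lettersOf]
  | cons s w ih =>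
    cases s <;>
      simp [facProd, letterProd, lettersOf, gfac, glet, List.map_append, List.prod_append,
        mul_assoc] at * <;>
      rw [ih]

include hcm hωtr ha hb₀ hτb₀ in
lemma fac_pair_zero (s : Bool) (w' : List Bool) :
    ω (facProd a b₀ (s :: s :: w')) = 0 := by
  rw [facProd_eq_letterProd]
  cases s with
  | true =>
    have : lettersOf (true :: true :: w')
        = true :: false :: true :: (false :: lettersOf w') := by
      simp [lettersOf]
    rw [this]
    exact letters_ABA_zero A B ω τ hcm ha hb₀ hτb₀ _
  | false =>
    have h0 : lettersOf (false :: false :: w')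
        = [false] ++ (true :: false :: true :: lettersOf w') := by
      simp [lettersOf]
    rw [h0]
    rw [show letterProd a b₀ ([false] ++ (true :: false :: true :: lettersOf w'))
        = (([false] ++ (true :: false :: true :: lettersOf w')).map (glet a b₀)).prod from rfl]
    rw [omega_rot ω hωtr (glet a b₀) [false] (true :: false :: true :: lettersOf w')]
    have h1 : (true :: false :: true :: lettersOf w') ++ [false]
        = true :: false :: true :: (lettersOf w' ++ [false]) := by simp
    rw [h1]
    exact letters_ABA_zero A B ω τ hcm ha hb₀ hτb₀ _

include hcm hωtr ha hb₀ hτb₀ in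
lemma fac_bad_lin (w : List Bool) (i : ℕ) (hi : i + 1 < w.length)
    (heq : w.getD (i+1) false = w.getD i false) :
    ω (facProd a b₀ w) = 0 := by
  have hrot : ω (facProd a b₀ w) = ω (facProd a b₀ (w.drop i ++ w.take i)) := by
    conv_lhs => rw [← List.take_append_drop i w]
    exact omega_rot ω hωtr (gfac a b₀) (w.take i) (w.drop i)
  have hlen : 2 ≤ (w.drop i).length := by
    rw [List.length_drop]; omega
  obtain ⟨s, s', r, hd⟩ : ∃ s s' r, w.drop i = s :: s' :: r := by
    cases hdrop : w.drop i with
    | nil => rw [hdrop] at hlen; simp at hlen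
    | cons s t =>
      cases t with
      | nil => rw [hdrop] at hlen; simp at hlen
      | cons s' r => exact ⟨s, s', r, rfl⟩
  have h0 : s = w.getD i false := by
    have := getD_drop w false i 0
    rw [hd] at this; simpa using this
  have h1 : s' = w.getD (i+1) false := by
    have := getD_drop w false i 1
    rw [hd] at this; simpa using this
  have hss : s' = s := by rw [h0, h1, heq]
  rw [hrot, hd, hss, List.cons_append, List.cons_append]
  exact fac_pair_zero A B ω τ hcm hωtr ha hb₀ hτb₀ s (r ++ w.take i)

include hcm hωtr ha hb₀ hτb₀ in
lemma fac_bad (w : List Bool) (hw : 1 ≤ w.length)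
    (hbad : (∃ i, i + 1 < w.length ∧ w.getD (i+1) false = w.getD i false)
      ∨ w.getD (w.length - 1) false = w.getD 0 false) :
    ω (facProd a b₀ w) = 0 := by
  rcases hbad with ⟨i, hi, heq⟩ | hwrap
  · exact fac_bad_lin A B ω τ hcm hωtr ha hb₀ hτb₀ w i hi heq
  by_cases h1 : w.length = 1
  · obtain ⟨s, rfl⟩ : ∃ s, w = [s] := by
      cases w with
      | nil => simp at h1
      | cons s t =>
        cases t with
        | nil => exact ⟨s, rfl⟩
        | cons s' r => simp at h1
    have key : ω (a * b₀) = 0 := by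
      have h := hcm_list A B ω τ hcm ha [(a, b₀)] (by simp)
        (by intro p hp; simp at hp; subst hp; exact ⟨ha, hb₀⟩)
      simpa [hτb₀] using h
    cases s with
    | true => simpa [facProd, gfac] using key
    | false =>
      have : ω (facProd a b₀ [false]) = ω (a * b₀) := by
        simp only [facProd, gfac, List.map_cons, List.map_nil, List.prod_cons, List.prod_nil,
          mul_one, if_neg Bool.false_ne_true]
        exact hωtr b₀ a
      rw [this, key]
  · -- length ≥ 2
    have hlen2 : 2 ≤ w.length := by omega
    obtain ⟨w₀, w', rfl⟩ : ∃ w₀ w', w = w₀ :: w' := by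
      cases w with
      | nil => simp at hw
      | cons w₀ w' => exact ⟨w₀, w', rfl⟩
    have hrot : ω (facProd a b₀ (w₀ :: w')) = ω (facProd a b₀ (w' ++ [w₀])) := by
      have := omega_rot ω hωtr (gfac a b₀) [w₀] w'
      simpa [facProd] using this
    set v := w' ++ [w₀] with hv
    have hvlen : v.length = w'.length + 1 := by simp [hv]
    set j := w'.length - 1 with hj
    have hw' : 1 ≤ w'.length := by
      have := List.length_cons (a := w₀) (as := w'); omega
    have hgj : v.getD j false = w'.getD j false := by
      rw [hv, List.getD_append _ _ _ _ (by omega)]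
    have hgj1 : v.getD (j+1) false = w₀ := by
      have hjj : j + 1 = w'.length := by omega
      rw [hv, hjj]
      rw [List.getD_append_right _ _ _ _ (le_refl _)]
      simp
    have hjj2 : (w₀ :: w').length - 1 = j + 1 := by
      simp only [List.length_cons]; omega
    have hwrap2 : w'.getD j false = w₀ := by
      have h := hwrap
      rw [hjj2] at h
      simpa using h
    rw [hrot]
    apply fac_bad_lin A B ω τ hcm hωtr ha hb₀ hτb₀ v j (by omega)
    rw [hgj1, hgj, hwrap2]


lemma bool_ne {x y : Bool} (h : ¬ x = y) : x = !y := by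
  cases x <;> cases y <;> simp_all

lemma alt_recon (s : Bool) : ∀ (m : ℕ) (w : List Bool), w.length = 2 * m →
    (∀ i, i < 2 * m → w.getD i false = if i % 2 = 0 then s else !s) → w = altRec s m := by
  intro m
  induction m with
  | zero =>
    intro w hw _
    cases w with
    | nil => rfl
    | cons c t => simp at hw
  | succ m ih =>
    intro w hw hp
    obtain ⟨c0, c1, w', rfl⟩ : ∃ c0 c1 w', w = c0 :: c1 :: w' := by
      cases w with
      | nil => simp at hw
      | cons c0 t =>
        cases t with
        | nil => simp at hw; omega
        | cons c1 w' => exact ⟨c0, c1, w', rfl⟩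
    have h0 : c0 = s := by have := hp 0 (by omega); simpa using this
    have h1 : c1 = !s := by have := hp 1 (by omega); simpa using this
    have hw' : w'.length = 2 * m := by simp at hw; omega
    have hp' : ∀ i, i < 2*m → w'.getD i false = if i % 2 = 0 then s else !s := by
      intro i hi
      have h2 := hp (i+2) (by omega)
      have hmod : (i+2) % 2 = i % 2 := by omega
      rw [hmod] at h2
      simpa [List.getD_cons_succ] using h2
    rw [h0, h1, ih w' hw' hp']
    rfl

lemma alt_of_not_bad (w : List Bool) (hw : 1 ≤ w.length)
    (hbad : ¬ ((∃ i, i + 1 < w.length ∧ w.getD (i+1) false = w.getD i false)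
      ∨ w.getD (w.length - 1) false = w.getD 0 false)) :
    ∃ m, 1 ≤ m ∧ w.length = 2 * m ∧ w = altRec (w.getD 0 false) m := by
  push_neg at hbad
  obtain ⟨hlin, hwrap⟩ := hbad
  have hpar : ∀ i, i < w.length →
      w.getD i false = if i % 2 = 0 then w.getD 0 false else !(w.getD 0 false) := by
    intro i
    induction i with
    | zero => intro _; simp
    | succ i ih =>
      intro h
      have hi : i < w.length := by omega
      have hflip : w.getD (i+1) false = !(w.getD i false) := bool_ne (hlin i h)
      rw [hflip, ih hi]
      rcases Nat.even_or_odd i with he | ho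
      · have h2 : i % 2 = 0 := Nat.even_iff.mp he
        have h3 : (i+1) % 2 = 1 := by omega
        simp [h2, h3]
      · have h2 : i % 2 = 1 := Nat.odd_iff.mp ho
        have h3 : (i+1) % 2 = 0 := by omega
        simp [h2, h3]
  have heven : w.length % 2 = 0 := by
    by_contra hodd
    have h2 : (w.length - 1) % 2 = 0 := by omega
    have h3 := hpar (w.length - 1) (by omega)
    rw [h2, if_pos rfl] at h3
    exact hwrap h3
  refine ⟨w.length / 2, by omega, by omega, ?_⟩
  apply alt_recon _ _ _ (by omega)
  intro i hi
  exact hpar i (by omega)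

lemma pow_shift (x y : C) : ∀ m, (x * y) ^ (m+1) = x * ((y * x) ^ m * y) := by
  intro m
  induction m with
  | zero => simp
  | succ m ih =>
    rw [pow_succ, ih, pow_succ]
    simp [mul_assoc]

lemma omega_cyc (hωtr : ∀ x y : C, ω (x * y) = ω (y * x)) (x y : C) (m : ℕ) (hm : 1 ≤ m) :
    ω ((x*y)^m) = ω ((y*x)^m) := by
  obtain ⟨m', rfl⟩ : ∃ m', m = m'+1 := ⟨m-1, by omega⟩
  rw [pow_shift, hωtr, pow_succ, mul_assoc]

lemma yx_pow (a b₀ : C) : ∀ m, ((b₀*a)*(a*b₀))^(m+1)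
    = b₀ * ((((a*a)*(b₀*b₀))^m * (a*a)) * b₀) := by
  intro m
  induction m with
  | zero => simp [mul_assoc]
  | succ m ih =>
    rw [pow_succ, ih, pow_succ]
    simp [mul_assoc]

include hcm hωtr ha hb₀ in
lemma eval_alt (m : ℕ) (hm : 1 ≤ m) (s : Bool) :
    ω (facProd a b₀ (altRec s m)) = ω (a ^ (2*m)) * (τ (b₀*b₀))^m := by
  rw [facProd_altRec]
  have hyx : ω ((gfac a b₀ s * gfac a b₀ !s) ^ m) = ω (((b₀*a) * (a*b₀)) ^ m) := by
    cases s with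
    | false => simp [gfac]
    | true =>
      have := omega_cyc ω hωtr (a*b₀) (b₀*a) m hm
      simpa [gfac] using this
  rw [hyx]
  obtain ⟨m', rfl⟩ : ∃ m', m = m'+1 := ⟨m-1, by omega⟩
  rw [yx_pow, hωtr]
  have hQ : ((((a*a)*(b₀*b₀))^m' * (a*a)) * b₀) * b₀ = ((a*a)*(b₀*b₀))^(m'+1) := by
    rw [pow_succ]
    simp [mul_assoc]
  rw [hQ]
  have hrep := hcm_list A B ω τ hcm ha (List.replicate (m'+1) (a*a, b₀*b₀)) (by simp)
    (by
      intro p hp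
      have hp' := List.eq_of_mem_replicate hp
      subst hp'
      exact ⟨mul_mem ha ha, mul_mem hb₀ hb₀⟩)
  simp only [List.map_replicate, List.prod_replicate] at hrep
  rw [hrep]
  congr 2
  rw [← pow_two, ← pow_mul]

end Eval

lemma expand_pow (x z : C) (n : ℕ) :
    (x + z) ^ n = ∑ v : Fin n → Bool, (List.ofFn fun i => cond (v i) x z).prod := by
  induction n with
  | zero =>
    simp
  | succ n ih =>
    have hsum : ∑ v : Fin (n+1) → Bool, (List.ofFn fun i => cond (v i) x z).prod
        = ∑ p : Bool × (Fin n → Bool),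
            (List.ofFn fun i => cond ((Fin.cons p.1 p.2 : Fin (n+1) → Bool) i) x z).prod := by
      rw [← Equiv.sum_comp (Fin.consEquiv fun _ => Bool)]
      apply Finset.sum_congr rfl
      intro p _
      obtain ⟨b, v⟩ := p
      rfl
    rw [hsum]
    have hterm : ∀ p : Bool × (Fin n → Bool),
        (List.ofFn fun i => cond ((Fin.cons p.1 p.2 : Fin (n+1) → Bool) i) x z).prod
          = (cond p.1 x z) * (List.ofFn fun i => cond (p.2 i) x z).prod := by
      intro p
      rw [List.ofFn_succ]
      simp [Fin.cons_succ]
    simp only [hterm]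
    rw [Fintype.sum_prod_type, Fintype.sum_bool]
    simp only [Bool.cond_true, Bool.cond_false]
    rw [← Finset.mul_sum, ← Finset.mul_sum, ← ih, ← add_mul]
    rw [pow_succ']

lemma sign_split (x y : C) (w : List Bool) :
    (w.map fun s => cond s x (-y)).prod
      = (-1 : C) ^ (w.count false) * (w.map fun s => cond s x y).prod := by
  induction w with
  | nil => simp
  | cons s w ih =>
    cases s with
    | true =>
      have ec : (true :: w).count false = w.count false :=
        List.count_cons_of_ne (by simp) (l := w)
      rw [List.map_cons, List.map_cons, List.prod_cons, List.prod_cons, ec, ih,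
        Bool.cond_true, Bool.cond_true]
      have hc : Commute ((-1 : C) ^ w.count false) x :=
        (Commute.neg_one_left x).pow_left _
      rw [← mul_assoc, ← hc.eq, mul_assoc]
    | false =>
      have ec : (false :: w).count false = w.count false + 1 :=
        List.count_cons_self (a := false) (l := w)
      rw [List.map_cons, List.map_cons, List.prod_cons, List.prod_cons, ec, ih,
        Bool.cond_false, Bool.cond_false]
      have hc : Commute ((-1 : C) ^ w.count false) y :=
        (Commute.neg_one_left y).pow_left _
      rw [neg_mul, ← mul_assoc, ← hc.eq, mul_assoc, pow_succ, mul_assoc, neg_one_mul, mul_neg]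

lemma omega_neg_pow (ω : C →ₗ[ℂ] ℂ) (k : ℕ) (u : C) :
    ω ((-1 : C) ^ k * u) = (-1 : ℂ) ^ k * ω u := by
  have h1 : ((-1 : C) ^ k) * u = ((-1 : ℂ) ^ k) • u := by
    rw [← neg_one_smul ℂ (1 : C), smul_pow, one_pow, smul_mul_assoc, one_mul]
  rw [h1, map_smul, smul_eq_mul]

end CMAux

/-- Theorem 3.13(4): commutator of cyclically monotone elements. If the pair `(A, B)` of
∗-subalgebras (`1 ∈ B`) is cyclically monotone with respect to `(ω, τ)` and `a ∈ A`,
`b ∈ B` are self-adjoint, then with `r = √(τ(b²) - τ(b)²)`: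
`ω((i(ab - ba))^n) = 2 r^n ω(a^n)` for even `n`, and `= 0` for odd `n`. -/
theorem commutator_cyclic_monotone
    {C : Type*} [Ring C] [StarRing C] [Algebra ℂ C] [StarModule ℂ C]
    (A : NonUnitalStarSubalgebra ℂ C) (B : StarSubalgebra ℂ C)
    (ω τ : C →ₗ[ℂ] ℂ)
    (hτ1 : τ 1 = 1)
    (hτtr : ∀ x y : C, τ (x * y) = τ (y * x))
    (hτstar : ∀ x : C, τ (star x) = starRingEnd ℂ (τ x))
    (hτpos : ∀ x : C, 0 ≤ τ (star x * x))
    (hωtr : ∀ x y : C, ω (x * y) = ω (y * x))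
    (hcm : ∀ (n : ℕ) (a b : ℕ → C), 1 ≤ n → (∀ i, a i ∈ A) → (∀ i, b i ∈ B) →
      ω (((List.range n).map (fun i => a i * b i)).prod)
        = ω (((List.range n).map a).prod) * ∏ i ∈ Finset.range n, τ (b i))
    (a b : C) (ha : a ∈ A) (hb : b ∈ B)
    (has : IsSelfAdjoint a) (hbs : IsSelfAdjoint b)
    (n : ℕ) (hn : 1 ≤ n) :
    (Even n →
      ω ((Complex.I • (a * b - b * a)) ^ n)
        = ((2 * (Real.sqrt ((τ (b * b)).re - (τ b).re ^ 2)) ^ n : ℝ) : ℂ) * ω (a ^ n)) ∧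
    (Odd n → ω ((Complex.I • (a * b - b * a)) ^ n) = 0) := by
  classical
  set b₀ : C := b - (τ b) • 1 with hb₀def
  have hb₀B : b₀ ∈ B := by
    apply sub_mem hb
    have h1 : (τ b) • (1 : C) = algebraMap ℂ C (τ b) := (Algebra.algebraMap_eq_smul_one (τ b)).symm
    rw [h1]
    exact B.algebraMap_mem (τ b)
  have hτb₀ : τ b₀ = 0 := by
    rw [hb₀def, map_sub, map_smul, hτ1, smul_eq_mul, mul_one, sub_self]
  have hτb_real : (starRingEnd ℂ) (τ b) = τ b := by
    have h := hτstar b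
    rw [hbs.star_eq] at h
    exact h.symm
  have hcommeq : a * b - b * a = a * b₀ + -(b₀ * a) := by
    rw [hb₀def, mul_sub, sub_mul, mul_smul_comm, smul_mul_assoc, mul_one, one_mul]
    abel
  have hpow : (Complex.I • (a * b - b * a)) ^ n
      = Complex.I ^ n • ((a * b₀) + -(b₀ * a)) ^ n := by
    rw [hcommeq, smul_pow]
  have hterm : ∀ v : Fin n → Bool,
      ω ((List.ofFn fun i => cond (v i) (a * b₀) (-(b₀ * a))).prod)
        = (-1 : ℂ) ^ ((List.ofFn v).count false)
            * ω (CMAux.facProd a b₀ (List.ofFn v)) := by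
    intro v
    have h1 : (List.ofFn fun i => cond (v i) (a * b₀) (-(b₀ * a)))
        = (List.ofFn v).map (fun s => cond s (a * b₀) (-(b₀ * a))) := by
      rw [List.map_ofFn]
      rfl
    have h2 : ((List.ofFn v).map fun s => cond s (a * b₀) (b₀ * a))
        = (List.ofFn v).map (CMAux.gfac a b₀) := by
      apply List.map_congr_left
      intro s _
      cases s <;> rfl
    rw [h1, CMAux.sign_split, h2]
    exact CMAux.omega_neg_pow ω _ _
  have hLHS : ω ((Complex.I • (a * b - b * a)) ^ n)
      = Complex.I ^ n * ∑ v : Fin n → Bool,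
          ((-1 : ℂ) ^ ((List.ofFn v).count false)
            * ω (CMAux.facProd a b₀ (List.ofFn v))) := by
    rw [hpow, map_smul, smul_eq_mul]
    congr 1
    rw [CMAux.expand_pow, map_sum]
    exact Finset.sum_congr rfl fun v _ => hterm v
  constructor
  · -- Even case
    intro heven
    obtain ⟨m, hm⟩ := heven
    have hm1 : 1 ≤ m := by omega
    have h2m : n = 2 * m := by omega
    -- real-value preliminaries
    have hb₀sa : star b₀ = b₀ := by
      have hst : star (τ b) = τ b := hτb_real
      rw [hb₀def, star_sub, hbs.star_eq, star_smul, star_one, hst]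
    have ht_nonneg : (0 : ℂ) ≤ τ (b₀ * b₀) := by
      have h := hτpos b₀
      rwa [hb₀sa] at h
    have ht_val : τ (b₀ * b₀) = τ (b * b) - (τ b) ^ 2 := by
      have expand : b₀ * b₀
          = b * b - (τ b) • b - (τ b) • b + ((τ b) * (τ b)) • (1 : C) := by
        rw [hb₀def]
        simp only [sub_mul, mul_sub, smul_mul_assoc, mul_smul_comm, one_mul, mul_one,
          smul_smul, smul_sub]
        abel
      rw [expand]
      simp only [map_add, map_sub, map_smul, hτ1, smul_eq_mul, mul_one]
      ring
    have him : (τ b).im = 0 := Complex.conj_eq_iff_im.mp hτb_real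
    set R : ℝ := (τ (b * b)).re - (τ b).re ^ 2 with hRdef
    have htre : (τ (b₀ * b₀)).re = R := by
      rw [hRdef, ht_val, Complex.sub_re, pow_two, Complex.mul_re, him]
      ring
    have htim : (τ (b₀ * b₀)).im = 0 := by
      have h := ht_nonneg
      rw [Complex.le_def] at h
      exact h.2.symm
    have htre_nonneg : (0 : ℝ) ≤ (τ (b₀ * b₀)).re := by
      have h := ht_nonneg
      rw [Complex.le_def] at h
      simpa using h.1
    have hR0 : 0 ≤ R := htre ▸ htre_nonneg
    have ht_eq : τ (b₀ * b₀) = (R : ℂ) := by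
      apply Complex.ext
      · rw [htre, Complex.ofReal_re]
      · rw [htim, Complex.ofReal_im]
    -- the two alternating words
    set v1 : Fin n → Bool := fun i => (CMAux.altRec true m).getD i.val false with hv1def
    set v2 : Fin n → Bool := fun i => (CMAux.altRec false m).getD i.val false with hv2def
    have hofn : ∀ s : Bool,
        List.ofFn (fun i : Fin n => (CMAux.altRec s m).getD i.val false)
          = CMAux.altRec s m := by
      intro s
      apply List.ext_getElem
      · rw [List.length_ofFn, CMAux.altRec_length]; omega
      · intro i h1 h2
        rw [List.getElem_ofFn]
        exact List.getD_eq_getElem _ _ h2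
    obtain ⟨m', hmm'⟩ : ∃ m', m = m' + 1 := ⟨m - 1, by omega⟩
    have hv12 : v1 ≠ v2 := by
      intro h
      have h0 := congrFun h ⟨0, by omega⟩
      rw [hv1def, hv2def] at h0
      simp only [hmm', CMAux.altRec] at h0
      simp at h0
    have hzero : ∀ v ∈ (Finset.univ : Finset (Fin n → Bool)),
        v ∉ ({v1, v2} : Finset (Fin n → Bool)) →
        ((-1 : ℂ) ^ ((List.ofFn v).count false)
            * ω (CMAux.facProd a b₀ (List.ofFn v))) = 0 := by
      intro v _ hv
      set w := List.ofFn v with hwdef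
      have hlen : w.length = n := List.length_ofFn (f := v)
      by_cases hbad : (∃ i, i + 1 < w.length ∧ w.getD (i+1) false = w.getD i false)
          ∨ w.getD (w.length - 1) false = w.getD 0 false
      · rw [CMAux.fac_bad A B ω τ hcm hωtr ha hb₀B hτb₀ w (by omega) hbad, mul_zero]
      · exfalso
        obtain ⟨m'', hm''1, hm''2, hw⟩ := CMAux.alt_of_not_bad w (by omega) hbad
        have hmeq : m'' = m := by omega
        rw [hmeq] at hw
        have hveq : v = fun i : Fin n => (CMAux.altRec (w.getD 0 false) m).getD i.val false := by
          funext i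
          rw [← hw]
          rw [hwdef, List.getD_eq_getElem _ _ (by rw [List.length_ofFn]; exact i.isLt),
            List.getElem_ofFn]
        apply hv
        cases hs : w.getD 0 false with
        | true =>
          rw [hveq, hs]
          exact Finset.mem_insert_self _ _
        | false =>
          rw [hveq, hs]
          exact Finset.mem_insert_of_mem (Finset.mem_singleton_self _)
    have hsum2 : (∑ v : Fin n → Bool,
          ((-1 : ℂ) ^ ((List.ofFn v).count false)
            * ω (CMAux.facProd a b₀ (List.ofFn v))))
        = ((-1 : ℂ) ^ ((List.ofFn v1).count false) * ω (CMAux.facProd a b₀ (List.ofFn v1)))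
          + ((-1 : ℂ) ^ ((List.ofFn v2).count false)
            * ω (CMAux.facProd a b₀ (List.ofFn v2))) := by
      rw [← Finset.sum_subset (Finset.subset_univ ({v1, v2} : Finset (Fin n → Bool))) hzero]
      exact Finset.sum_pair hv12
    have heval : ∀ s : Bool,
        (-1 : ℂ) ^ (((List.ofFn fun i : Fin n => (CMAux.altRec s m).getD i.val false)).count false)
          * ω (CMAux.facProd a b₀ (List.ofFn fun i : Fin n => (CMAux.altRec s m).getD i.val false))
        = (-1 : ℂ) ^ m * (ω (a ^ n) * (τ (b₀ * b₀)) ^ m) := by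
      intro s
      rw [hofn s, CMAux.altRec_count,
        CMAux.eval_alt A B ω τ hcm hωtr ha hb₀B m hm1 s, ← h2m]
    rw [hLHS, hsum2, hv1def, hv2def, heval true, heval false]
    have hIn : Complex.I ^ n = (-1 : ℂ) ^ m := by
      rw [h2m, pow_mul, Complex.I_sq]
    rw [hIn, ht_eq]
    have hsqrt : (Real.sqrt R) ^ n = R ^ m := by
      rw [h2m, pow_mul, Real.sq_sqrt hR0]
    rw [hsqrt]
    push_cast
    have hneg : (-1 : ℂ) ^ m * (-1 : ℂ) ^ m = 1 := by
      rw [← mul_pow]; norm_num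
    linear_combination (2 * (R : ℂ) ^ m * ω (a ^ n)) * hneg
  · -- Odd case
    intro hodd
    have hz : ∀ v : Fin n → Bool, ω (CMAux.facProd a b₀ (List.ofFn v)) = 0 := by
      intro v
      set w := List.ofFn v with hwdef
      have hlen : w.length = n := List.length_ofFn (f := v)
      by_cases hbad : (∃ i, i + 1 < w.length ∧ w.getD (i+1) false = w.getD i false)
          ∨ w.getD (w.length - 1) false = w.getD 0 false
      · exact CMAux.fac_bad A B ω τ hcm hωtr ha hb₀B hτb₀ w (by omega) hbad
      · exfalso
        obtain ⟨m, hm1, hm2, -⟩ := CMAux.alt_of_not_bad w (by omega) hbad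
        rw [Nat.odd_iff] at hodd
        omega
    rw [hLHS]
    simp [hz]
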